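/- For k < l in [d], the vector h_{kl} = (a_{ll} + a_{lk} + a_{kl} + a_{kk})/2 is not a nonnegative integer combination of the columns a_{ij} of the CDEM matrix, i.e., h_{kl} ∉ Q(A). -/

import Mathlib

open Finset

/-- The column `a_{ij}` of the CDEM matrix: 1 in coordinate `j`, 1 in coordinate
`d + i`, 1 in coordinate `2d` (the last one) iff `i = j`, and 0 elsewhere
(coordinates are 0-based). -/
def acol (d : ℕ) (i j : Fin d) : Fin (2 * d + 1) → ℤ := fun t =>
  (if (t : ℕ) = (j : ℕ) then 1 else 0) +
  (if (t : ℕ) = d + (i : ℕ) then 1 else 0) +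
  (if (t : ℕ) = 2 * d ∧ i = j then 1 else 0)

/-- The vector `h_{kl} = (a_{ll} + a_{lk} + a_{kl} + a_{kk}) / 2`. -/
def hvec (d : ℕ) (k l : Fin d) : Fin (2 * d + 1) → ℤ := fun t =>
  (acol d l l t + acol d l k t + acol d k l t + acol d k k t) / 2

/-- The CDEM semigroup: nonnegative integer combinations of the columns. -/
def cdemQ (d : ℕ) : Set (Fin (2 * d + 1) → ℤ) :=
  {b | ∃ x : Fin d → Fin d → ℕ, b = fun t => ∑ i, ∑ j, (x i j : ℤ) * acol d i j t}

/-- The real cone `K(A)` generated by the CDEM columns. -/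
def cdemCone (d : ℕ) (v : Fin (2 * d + 1) → ℝ) : Prop :=
  ∃ x : Fin d → Fin d → ℝ, (∀ i j, 0 ≤ x i j) ∧
    v = fun t => ∑ i, ∑ j, x i j * (acol d i j t : ℝ)

/-- The saturation `Q_sat = K(A) ∩ ℤ^{2d+1}` of the CDEM semigroup. -/
def cdemQsat (d : ℕ) : Set (Fin (2 * d + 1) → ℤ) :=
  {b | cdemCone d fun t => (b t : ℝ)}

/-- The `i`-th coordinate (0-based, `i < d`) as an index into `Fin (2d+1)`. -/
def idx1 (d : ℕ) (i : Fin d) : Fin (2 * d + 1) := ⟨(i : ℕ), by have := i.isLt; omega⟩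

/-- The `(d+i)`-th coordinate as an index into `Fin (2d+1)`. -/
def idx2 (d : ℕ) (i : Fin d) : Fin (2 * d + 1) := ⟨d + (i : ℕ), by have := i.isLt; omega⟩

def idxL (d : ℕ) : Fin (2 * d + 1) := ⟨2 * d, by omega⟩

lemma acol_idx1 (d : ℕ) (i j m : Fin d) :
    acol d i j (idx1 d m) = if m = j then 1 else 0 := by
  have h1 : ¬ ((m : ℕ) = d + (i : ℕ)) := by have := m.isLt; omega
  have h2 : ¬ ((m : ℕ) = 2 * d) := by have := m.isLt; omega
  simp [acol, idx1, h1, h2, Fin.val_eq_val]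

lemma acol_idx2 (d : ℕ) (i j m : Fin d) :
    acol d i j (idx2 d m) = if m = i then 1 else 0 := by
  have h1 : ¬ ((d + (m : ℕ)) = (j : ℕ)) := by have := j.isLt; omega
  have h2 : ¬ ((d + (m : ℕ)) = 2 * d) := by have := m.isLt; omega
  have h3 : (d + (m : ℕ) = d + (i : ℕ)) ↔ m = i := by
    rw [← Fin.val_eq_val]; omega
  simp [acol, idx2, h1, h2, h3, Fin.val_inj]

lemma acol_idxL (d : ℕ) (i j : Fin d) :
    acol d i j (idxL d) = if i = j then 1 else 0 := by
  have h1 : ¬ ((2 * d : ℕ) = (j : ℕ)) := by have := j.isLt; omega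
  have h2 : ¬ ((2 * d : ℕ) = d + (i : ℕ)) := by have := i.isLt; omega
  simp [acol, idxL, h1, h2]

lemma sum_acol_idx1 (d : ℕ) (x : Fin d → Fin d → ℕ) (m : Fin d) :
    ∑ i, ∑ j, (x i j : ℤ) * acol d i j (idx1 d m) = ∑ i, (x i m : ℤ) := by
  refine Finset.sum_congr rfl fun i _ => ?_
  simp [acol_idx1, mul_ite]

lemma sum_acol_idx2 (d : ℕ) (x : Fin d → Fin d → ℕ) (m : Fin d) :
    ∑ i, ∑ j, (x i j : ℤ) * acol d i j (idx2 d m) = ∑ j, (x m j : ℤ) := by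
  have : ∀ i : Fin d, ∑ j, (x i j : ℤ) * acol d i j (idx2 d m)
      = if m = i then ∑ j, (x i j : ℤ) else 0 := by
    intro i
    simp only [acol_idx2, mul_ite, mul_one, mul_zero]
    split <;> simp
  simp [this]

lemma sum_acol_idxL (d : ℕ) (x : Fin d → Fin d → ℕ) :
    ∑ i, ∑ j, (x i j : ℤ) * acol d i j (idxL d) = ∑ i, (x i i : ℤ) := by
  refine Finset.sum_congr rfl fun i _ => ?_
  simp [acol_idxL, mul_ite]

lemma hvec_idx1 (d : ℕ) (k l m : Fin d) (hkl : k ≠ l) :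
    hvec d k l (idx1 d m) = (if m = k then 1 else 0) + (if m = l then 1 else 0) := by
  simp only [hvec, acol_idx1]
  rcases eq_or_ne m k with rfl | hmk <;> rcases eq_or_ne m l with rfl | hml <;>
    simp_all

lemma hvec_idx2 (d : ℕ) (k l m : Fin d) (hkl : k ≠ l) :
    hvec d k l (idx2 d m) = (if m = k then 1 else 0) + (if m = l then 1 else 0) := by
  simp only [hvec, acol_idx2]
  rcases eq_or_ne m k with rfl | hmk <;> rcases eq_or_ne m l with rfl | hml <;>
    simp_all

lemma hvec_idxL (d : ℕ) (k l : Fin d) (hkl : k ≠ l) :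
    hvec d k l (idxL d) = 1 := by
  simp [hvec, acol_idxL, hkl, hkl.symm]

/-- For `k < l`, the vector `h_{kl}` is not a nonnegative integer combination of the
columns of the CDEM matrix, i.e. `h_{kl} ∉ Q(A)`. -/
theorem hvec_not_mem_Q (d : ℕ) (hd : 2 ≤ d) (k l : Fin d) (hkl : k < l) :
    hvec d k l ∉ cdemQ d := by
  rw [cdemQ]
  rintro ⟨x, hx⟩
  have hne : k ≠ l := ne_of_lt hkl
  have key : ∀ t, hvec d k l t = ∑ i, ∑ j, (x i j : ℤ) * acol d i j t :=
    fun t => congrFun hx t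
  -- column equations
  have hcol : ∀ m : Fin d, (∑ i, x i m : ℕ) =
      (if m = k then 1 else 0) + (if m = l then 1 else 0) := by
    intro m
    have h := key (idx1 d m)
    rw [sum_acol_idx1, hvec_idx1 d k l m hne] at h
    have : ((∑ i, x i m : ℕ) : ℤ) =
        ((if m = k then 1 else 0) + (if m = l then 1 else 0) : ℕ) := by
      push_cast
      exact h.symm
    exact_mod_cast this
  have hrow : ∀ m : Fin d, (∑ j, x m j : ℕ) =
      (if m = k then 1 else 0) + (if m = l then 1 else 0) := by
    intro m
    have h := key (idx2 d m)
    rw [sum_acol_idx2, hvec_idx2 d k l m hne] at h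
    have : ((∑ j, x m j : ℕ) : ℤ) =
        ((if m = k then 1 else 0) + (if m = l then 1 else 0) : ℕ) := by
      push_cast
      exact h.symm
    exact_mod_cast this
  have hdiag : (∑ i, x i i : ℕ) = 1 := by
    have h := key (idxL d)
    rw [sum_acol_idxL, hvec_idxL d k l hne] at h
    exact_mod_cast h.symm
  -- zero entries
  have hrow0 : ∀ m : Fin d, m ≠ k → m ≠ l → ∀ j, x m j = 0 := by
    intro m hmk hml j
    have := hrow m
    rw [if_neg hmk, if_neg hml] at this
    exact Finset.sum_eq_zero_iff.mp this j (mem_univ j)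
  have hcol0 : ∀ m : Fin d, m ≠ k → m ≠ l → ∀ i, x i m = 0 := by
    intro m hmk hml i
    have := hcol m
    rw [if_neg hmk, if_neg hml] at this
    exact Finset.sum_eq_zero_iff.mp this i (mem_univ i)
  -- reduce sums to pairs
  have pair : ∀ f : Fin d → ℕ, (∀ m, m ≠ k → m ≠ l → f m = 0) →
      ∑ m, f m = f k + f l := by
    intro f hf
    rw [← Finset.sum_pair hne]
    exact (Finset.sum_subset (Finset.subset_univ _) (fun m _ hm => by
      simp only [Finset.mem_insert, Finset.mem_singleton, not_or] at hm
      exact hf m hm.1 hm.2)).symm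
  have e1 : x k k + x l l = 1 := by
    have := pair (fun i => x i i) (fun m h1 h2 => hrow0 m h1 h2 m)
    rw [← this]; exact hdiag
  have e2 : x k k + x l k = 1 := by
    have := pair (fun i => x i k) (fun m h1 h2 => hrow0 m h1 h2 k)
    rw [← this, hcol k, if_pos rfl, if_neg hne]
  have e3 : x k l + x l l = 1 := by
    have := pair (fun i => x i l) (fun m h1 h2 => hrow0 m h1 h2 l)
    rw [← this, hcol l, if_neg hne.symm, if_pos rfl]
  have e4 : x k k + x k l = 1 := by
    have := pair (fun j => x k j) (fun m h1 h2 => hcol0 m h1 h2 k)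
    rw [← this, hrow k, if_pos rfl, if_neg hne]
  omega
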